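/- Let n ≥ 1. With E_i, T_i and K_j as in the context, the homogeneous component of total degree n of the multivariate power series K_2 equals (1/12)·( (n(3n−5)/2)·e_n + e_1·e_{n−1} ), where e_k denotes the k-th elementary symmetric polynomial in X_1, …, X_n regarded as an element of R (with e_0 = 1). -/

import Mathlib

/-- The homogeneous component of total degree `d` of a multivariate power series
in variables `X_1, …, X_n`: keep exactly the coefficients of monomials of total
degree `d`. -/
noncomputable def homComp (n d : ℕ) (F : MvPowerSeries (Fin n) ℚ) :
    MvPowerSeries (Fin n) ℚ :=
  fun e => if (e.sum fun _ k => k) = d then MvPowerSeries.coeff e F else 0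

/-- The `k`-th elementary symmetric polynomial in `X_1, …, X_n`, regarded as an
element of `MvPowerSeries (Fin n) ℚ` (with `e_0 = 1`). -/
noncomputable def esymmPS (n k : ℕ) : MvPowerSeries (Fin n) ℚ :=
  ∑ S ∈ Finset.powersetCard k (Finset.univ : Finset (Fin n)), ∏ i ∈ S, MvPowerSeries.X i

namespace Aux5
open MvPowerSeries Finset

variable {n : ℕ}

/-- total degree of an exponent -/
def deg (e : Fin n →₀ ℕ) : ℕ := e.sum fun _ k => k

lemma deg_add (a b : Fin n →₀ ℕ) : deg (a + b) = deg a + deg b :=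
  Finsupp.sum_add_index (by simp) (by simp)

lemma deg_single (i : Fin n) (k : ℕ) : deg (Finsupp.single i k) = k := by
  simp [deg, Finsupp.sum_single_index]

abbrev R (n : ℕ) := MvPowerSeries (Fin n) ℚ

/-- all coefficients below total degree k vanish -/
def LB (F : R n) (k : ℕ) : Prop := ∀ e : Fin n →₀ ℕ, deg e < k → MvPowerSeries.coeff e F = 0

/-- homogeneous of degree k -/
def Hom (F : R n) (k : ℕ) : Prop := ∀ e : Fin n →₀ ℕ, deg e ≠ k → MvPowerSeries.coeff e F = 0

lemma Hom.toLB {F : R n} {k : ℕ} (h : Hom F k) : LB F k := fun e he => h e (Nat.ne_of_lt he)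

lemma LB.mono {F : R n} {k j : ℕ} (h : LB F k) (hj : j ≤ k) : LB F j :=
  fun e he => h e (lt_of_lt_of_le he hj)

lemma LB.zero (F : R n) : LB F 0 := fun _ he => absurd he (Nat.not_lt_zero _)

lemma LB.mul {F G : R n} {j k : ℕ} (hF : LB F j) (hG : LB G k) : LB (F * G) (j + k) := by
  intro e he
  rw [MvPowerSeries.coeff_mul]
  apply Finset.sum_eq_zero
  rintro ⟨p, q⟩ hpq
  rw [Finset.HasAntidiagonal.mem_antidiagonal] at hpq
  have hdeg : deg p + deg q = deg e := by rw [← deg_add, hpq]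
  rcases lt_or_ge (deg p) j with h1 | h1
  · rw [hF p h1, zero_mul]
  · have : deg q < k := by omega
    rw [hG q this, mul_zero]

lemma Hom.mul {F G : R n} {j k : ℕ} (hF : Hom F j) (hG : Hom G k) : Hom (F * G) (j + k) := by
  intro e he
  rw [MvPowerSeries.coeff_mul]
  apply Finset.sum_eq_zero
  rintro ⟨p, q⟩ hpq
  rw [Finset.HasAntidiagonal.mem_antidiagonal] at hpq
  have hdeg : deg p + deg q = deg e := by rw [← deg_add, hpq]
  rcases ne_or_eq (deg p) j with h1 | h1
  · rw [hF p h1, zero_mul]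
  · have : deg q ≠ k := by omega
    rw [hG q this, mul_zero]

lemma Hom.add {F G : R n} {k : ℕ} (hF : Hom F k) (hG : Hom G k) : Hom (F + G) k := by
  intro e he
  rw [map_add, hF e he, hG e he, add_zero]

lemma LB.add {F G : R n} {k : ℕ} (hF : LB F k) (hG : LB G k) : LB (F + G) k := by
  intro e he
  rw [map_add, hF e he, hG e he, add_zero]

lemma Hom.X (i : Fin n) : Hom (MvPowerSeries.X i : R n) 1 := by
  intro e he
  rw [MvPowerSeries.coeff_X, if_neg]
  rintro rfl
  exact he (deg_single i 1)

lemma Hom.one : Hom (1 : R n) 0 := by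
  intro e he
  rw [MvPowerSeries.coeff_one, if_neg]
  rintro rfl
  exact he (by simp [deg])

lemma Hom.C (c : ℚ) : Hom (MvPowerSeries.C (σ := Fin n) (R := ℚ) c) 0 := by
  intro e he
  rw [MvPowerSeries.coeff_C, if_neg]
  rintro rfl
  exact he (by simp [deg])

lemma Hom.neg {F : R n} {k : ℕ} (hF : Hom F k) : Hom (-F) k := by
  intro e he; rw [map_neg, hF e he, neg_zero]

lemma LB.X_pow (i : Fin n) (k : ℕ) : LB ((MvPowerSeries.X i : R n) ^ k) k := by
  induction k with
  | zero => exact LB.zero _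
  | succ m ih =>
      rw [pow_succ]
      exact (ih.mul ((Hom.X i).toLB))

lemma Hom.prod_X (A : Finset (Fin n)) : Hom (∏ i ∈ A, (MvPowerSeries.X i : R n)) A.card := by
  induction A using Finset.cons_induction with
  | empty => simpa using Hom.one
  | cons a s ha ih =>
      rw [Finset.prod_cons, Finset.card_cons, add_comm s.card 1]
      exact (Hom.X a).mul ih

lemma Hom.of_eq {F : R n} {k j : ℕ} (h : Hom F k) (hkj : k = j) : Hom F j := hkj ▸ h
lemma LB.of_eq {F : R n} {k j : ℕ} (h : LB F k) (hkj : k = j) : LB F j := hkj ▸ h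

lemma coeff_homComp (d : ℕ) (F : R n) (e : Fin n →₀ ℕ) :
    MvPowerSeries.coeff e (homComp n d F) =
      if deg e = d then MvPowerSeries.coeff e F else 0 := by
  rw [MvPowerSeries.coeff_apply]; rfl

lemma homComp_sum {α : Type*} (d : ℕ) (s : Finset α) (f : α → R n) :
    homComp n d (∑ a ∈ s, f a) = ∑ a ∈ s, homComp n d (f a) := by
  apply MvPowerSeries.ext; intro e
  rw [coeff_homComp, map_sum]
  split_ifs with h
  · rw [map_sum]
    exact Finset.sum_congr rfl fun a _ => by rw [coeff_homComp, if_pos h]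
  · rw [map_sum]
    exact (Finset.sum_eq_zero fun a _ => by rw [coeff_homComp, if_neg h]).symm

lemma homComp_add (d : ℕ) (F G : R n) :
    homComp n d (F + G) = homComp n d F + homComp n d G := by
  apply MvPowerSeries.ext; intro e
  rw [coeff_homComp, map_add, map_add, coeff_homComp, coeff_homComp]
  split_ifs with h <;> simp

lemma homComp_eq_zero_of_LB {d : ℕ} {F : R n} (h : LB F (d + 1)) : homComp n d F = 0 := by
  apply MvPowerSeries.ext; intro e
  rw [coeff_homComp, map_zero]
  split_ifs with hd
  · exact h e (by omega)
  · rfl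

lemma homComp_eq_zero_of_Hom {d k : ℕ} {F : R n} (h : Hom F k) (hk : k ≠ d) :
    homComp n d F = 0 := by
  apply MvPowerSeries.ext; intro e
  rw [coeff_homComp, map_zero]
  split_ifs with hd
  · exact h e (by omega)
  · rfl

lemma homComp_eq_self_of_Hom {d : ℕ} {F : R n} (h : Hom F d) : homComp n d F = F := by
  apply MvPowerSeries.ext; intro e
  rw [coeff_homComp]
  split_ifs with hd
  · rfl
  · exact (h e hd).symm


set_option maxHeartbeats 1000000 in
/-- coefficients of `U i` -/
lemma coeff_U (i : Fin n) (Ei Ui : R n)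
    (hE : ∀ (d : Fin n →₀ ℕ), MvPowerSeries.coeff d Ei =
      if d = Finsupp.single i (d i) then (-1 : ℚ) ^ (d i) / (Nat.factorial (d i) : ℚ) else 0)
    (hU : MvPowerSeries.X i * Ui = 1 - Ei) (e : Fin n →₀ ℕ) :
    MvPowerSeries.coeff e Ui =
      if e = Finsupp.single i (e i) then
        (-1 : ℚ) ^ (e i) / (Nat.factorial (e i + 1) : ℚ) else 0 := by
  have h1 : (MvPowerSeries.coeff (Finsupp.single i 1 + e)) (MvPowerSeries.X i * Ui)
      = MvPowerSeries.coeff e Ui := by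
    rw [X_def]
    simpa using coeff_add_monomial_mul (Finsupp.single i 1) e Ui (1 : ℚ)
  have h2 := congrArg (MvPowerSeries.coeff (Finsupp.single i 1 + e)) hU
  rw [h1, map_sub, coeff_one, hE] at h2
  have happ : ((Finsupp.single i 1 + e : Fin n →₀ ℕ)) i = 1 + e i := by
    rw [Finsupp.add_apply, Finsupp.single_eq_same]
  rw [happ] at h2
  have hne : ¬(Finsupp.single i 1 + e = 0) := by
    intro hc
    have := congrArg (fun f : Fin n →₀ ℕ => f i) hc
    simp at this
  rw [if_neg hne] at h2
  rw [h2]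
  by_cases h : e = Finsupp.single i (e i)
  · have hcond : Finsupp.single i 1 + e = Finsupp.single i (1 + e i) := by
      rw [Finsupp.single_add, ← h]
    rw [if_pos hcond, if_pos h]
    rw [Nat.add_comm 1 (e i), pow_succ]
    ring
  · have hcond : ¬(Finsupp.single i 1 + e = Finsupp.single i (1 + e i)) := by
      intro hc
      apply h
      rw [Finsupp.single_add] at hc
      exact add_left_cancel hc
    rw [if_neg hcond, if_neg h]
    simp


set_option maxHeartbeats 1600000 in
lemma key (n : ℕ) (i : Fin n) (Ei Ui Ti : R n)
    (hE : ∀ (d : Fin n →₀ ℕ), MvPowerSeries.coeff d Ei =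
      if d = Finsupp.single i (d i) then (-1 : ℚ) ^ (d i) / (Nat.factorial (d i) : ℚ) else 0)
    (hU : MvPowerSeries.X i * Ui = 1 - Ei) (hT : Ti * Ui = 1) :
    ∃ W : R n, Ti * Ei =
      (1 - MvPowerSeries.C (σ := Fin n) (R := ℚ) (1/2) * MvPowerSeries.X i
        + MvPowerSeries.C (σ := Fin n) (R := ℚ) (1/12) * (MvPowerSeries.X i * MvPowerSeries.X i))
      + MvPowerSeries.X i ^ 3 * W := by
  have hX2U : (MvPowerSeries.X i * MvPowerSeries.X i) * Ui
      = MvPowerSeries.X i - MvPowerSeries.X i * Ei := by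
    rw [mul_assoc, hU]; ring
  have hPU : (1 + MvPowerSeries.C (σ := Fin n) (R := ℚ) (1/2) * MvPowerSeries.X i
        + MvPowerSeries.C (σ := Fin n) (R := ℚ) (1/12) * (MvPowerSeries.X i * MvPowerSeries.X i)) * Ui
      = Ui + MvPowerSeries.C (σ := Fin n) (R := ℚ) (1/2) * (1 - Ei)
        + MvPowerSeries.C (σ := Fin n) (R := ℚ) (1/12)
            * (MvPowerSeries.X i - MvPowerSeries.X i * Ei) := by
    rw [← hU, ← hX2U]; ring
  have cU := coeff_U i Ei Ui hE hU
  have cXE : ∀ e : Fin n →₀ ℕ, MvPowerSeries.coeff e (MvPowerSeries.X i * Ei)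
      = if Finsupp.single i 1 ≤ e then
          MvPowerSeries.coeff (e - Finsupp.single i 1) Ei else 0 := by
    intro e
    rw [X_def, coeff_monomial_mul]
    simp only [one_mul]
  have hDc : ∀ e : Fin n →₀ ℕ, e i ≤ 2 →
      MvPowerSeries.coeff e (1 - (1 + MvPowerSeries.C (σ := Fin n) (R := ℚ) (1/2) * MvPowerSeries.X i
        + MvPowerSeries.C (σ := Fin n) (R := ℚ) (1/12)
          * (MvPowerSeries.X i * MvPowerSeries.X i)) * Ui) = 0 := by
    intro e he
    have hco : MvPowerSeries.coeff e
        (1 - (1 + MvPowerSeries.C (σ := Fin n) (R := ℚ) (1/2) * MvPowerSeries.X i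
          + MvPowerSeries.C (σ := Fin n) (R := ℚ) (1/12)
            * (MvPowerSeries.X i * MvPowerSeries.X i)) * Ui)
        = (if e = 0 then (1:ℚ) else 0) - (MvPowerSeries.coeff e Ui
          + (1/2) * ((if e = 0 then (1:ℚ) else 0) - MvPowerSeries.coeff e Ei)
          + (1/12) * ((if e = Finsupp.single i 1 then (1:ℚ) else 0)
              - MvPowerSeries.coeff e (MvPowerSeries.X i * Ei))) := by
      rw [hPU, map_sub, map_add, map_add, coeff_one, coeff_C_mul, coeff_C_mul, map_sub,
        map_sub, coeff_one, coeff_X]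
    rw [hco, cU e, hE e, cXE e]
    by_cases h : e = Finsupp.single i (e i)
    · obtain ⟨k, rfl⟩ : ∃ k, e = Finsupp.single i k := ⟨e i, h⟩
      have hk : (Finsupp.single i k) i ≤ 2 := he
      rw [Finsupp.single_eq_same] at hk
      have cE0 : (MvPowerSeries.constantCoeff (σ := Fin n) (R := ℚ)) Ei = 1 := by
        have h0 := hE 0
        rw [← MvPowerSeries.coeff_zero_eq_constantCoeff_apply]
        simpa using h0
      have cE1 : MvPowerSeries.coeff (Finsupp.single i 1) Ei = -1 := by
        have h1 := hE (Finsupp.single i 1)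
        rw [if_pos (by rw [Finsupp.single_eq_same])] at h1
        rw [h1, Finsupp.single_eq_same]
        norm_num
      have hz1 : ¬((0 : Fin n →₀ ℕ) = Finsupp.single i 1) := by
        intro hc
        simpa using congrArg (fun f : Fin n →₀ ℕ => f i) hc
      interval_cases k
      · norm_num [Finsupp.single_eq_same, Finsupp.single_eq_zero, Finsupp.single_le_iff,
          Nat.factorial, cE0, cE1, hz1]
      · norm_num [Finsupp.single_eq_same, Finsupp.single_eq_zero, Finsupp.single_le_iff,
          ← Finsupp.single_tsub, (Finsupp.single_injective i).eq_iff, Nat.factorial,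
          cE0, cE1, hz1]
      · norm_num [Finsupp.single_eq_same, Finsupp.single_eq_zero, Finsupp.single_le_iff,
          ← Finsupp.single_tsub, (Finsupp.single_injective i).eq_iff, Nat.factorial,
          cE0, cE1, hz1]
    · have h0 : e ≠ 0 := by
        intro hc; exact h (by rw [hc]; simp)
      have h1 : e ≠ Finsupp.single i 1 := by
        intro hc; exact h (by rw [hc, Finsupp.single_eq_same])
      rw [if_neg h0, if_neg h, if_neg h1]
      have hXE0 : (if Finsupp.single i 1 ≤ e then
          MvPowerSeries.coeff (e - Finsupp.single i 1) Ei else 0) = 0 := by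
        split_ifs with hle
        · set m := e - Finsupp.single i 1 with hm
          rw [hE, if_neg]
          intro hc
          apply h
          have he2 : e = Finsupp.single i (m i + 1) := by
            rw [Finsupp.single_add, ← hc, hm, tsub_add_cancel_of_le hle]
          have hei : e i = m i + 1 := by rw [he2, Finsupp.single_eq_same]
          rw [hei]
          exact he2
        · rfl
      rw [hXE0]
      simp only [if_neg h, if_neg h0, if_neg h1]
      norm_num
  obtain ⟨Z, hZ⟩ : ∃ Z, 1 - (1 + MvPowerSeries.C (σ := Fin n) (R := ℚ) (1/2) * MvPowerSeries.X i
        + MvPowerSeries.C (σ := Fin n) (R := ℚ) (1/12) * (MvPowerSeries.X i * MvPowerSeries.X i)) * Ui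
      = MvPowerSeries.X i ^ 3 * Z :=
    (X_pow_dvd_iff (s := i) (n := 3)).mpr fun m hm => hDc m (by omega)
  refine ⟨Ti * Z, ?_⟩
  have hTE : Ti * Ei = Ti - MvPowerSeries.X i := by
    linear_combination Ti * hU - MvPowerSeries.X i * hT
  have hC2 : MvPowerSeries.C (σ := Fin n) (R := ℚ) (1/2) + MvPowerSeries.C (σ := Fin n) (R := ℚ) (1/2) = 1 := by
    rw [← map_add]; norm_num
  linear_combination hTE + (1 + MvPowerSeries.C (σ := Fin n) (R := ℚ) (1/2) * MvPowerSeries.X i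
        + MvPowerSeries.C (σ := Fin n) (R := ℚ) (1/12) * (MvPowerSeries.X i * MvPowerSeries.X i)) * hT
    + Ti * hZ + (MvPowerSeries.X i) * hC2


lemma himg (i : Fin n) :
    (powersetCard 2 (univ : Finset (Fin n))).filter (fun S => i ∈ S)
      = (univ.erase i).image (fun b => ({i, b} : Finset (Fin n))) := by
  ext S
  simp only [Finset.mem_filter, Finset.mem_powersetCard_univ, Finset.mem_image,
    Finset.mem_erase, Finset.mem_univ, and_true, true_and]
  constructor
  · rintro ⟨hc2, hiS⟩
    obtain ⟨a, b, hab, rfl⟩ := Finset.card_eq_two.mp hc2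
    rcases Finset.mem_insert.mp hiS with rfl | hib
    · exact ⟨b, hab.symm, rfl⟩
    · rcases Finset.mem_singleton.mp hib with rfl
      exact ⟨a, hab, (Finset.pair_comm i a)⟩
  · rintro ⟨b, hbi, rfl⟩
    exact ⟨Finset.card_pair (fun h => hbi h.symm), Finset.mem_insert_self i {b}⟩

lemma comb (n : ℕ) :
    (∑ S ∈ powersetCard 2 (univ : Finset (Fin n)), ∑ i ∈ S,
        (MvPowerSeries.X i * MvPowerSeries.X i) * ∏ j ∈ Sᶜ, (MvPowerSeries.X j : R n))
      + n • ∏ j, (MvPowerSeries.X j : R n)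
    = (∑ b, (MvPowerSeries.X b : R n))
        * ∑ b, ∏ j ∈ ({b} : Finset (Fin n))ᶜ, (MvPowerSeries.X j : R n) := by
  rw [Finset.sum_mul_sum]
  have hsplit : ∀ i : Fin n,
      ∑ b, (MvPowerSeries.X i : R n) * ∏ j ∈ ({b} : Finset (Fin n))ᶜ, MvPowerSeries.X j
      = (∑ b ∈ univ.erase i,
          (MvPowerSeries.X i : R n) * ∏ j ∈ ({b} : Finset (Fin n))ᶜ, MvPowerSeries.X j)
        + MvPowerSeries.X i * ∏ j ∈ ({i} : Finset (Fin n))ᶜ, MvPowerSeries.X j :=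
    fun i => (Finset.sum_erase_add univ _ (mem_univ i)).symm
  rw [Finset.sum_congr rfl (fun i _ => hsplit i), Finset.sum_add_distrib]
  have h2 : ∀ i : Fin n,
      (MvPowerSeries.X i : R n) * ∏ j ∈ ({i} : Finset (Fin n))ᶜ, MvPowerSeries.X j
        = ∏ j, (MvPowerSeries.X j : R n) := by
    intro i
    rw [mul_comm]
    calc (∏ j ∈ ({i} : Finset (Fin n))ᶜ, (MvPowerSeries.X j : R n)) * MvPowerSeries.X i
        = (∏ j ∈ ({i} : Finset (Fin n))ᶜ, (MvPowerSeries.X j : R n))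
            * ∏ j ∈ ({i} : Finset (Fin n)), MvPowerSeries.X j := by
          rw [Finset.prod_singleton]
      _ = ∏ j, (MvPowerSeries.X j : R n) := Finset.prod_compl_mul_prod _ _
  rw [Finset.sum_congr rfl (fun i _ => h2 i), Finset.sum_const, Finset.card_univ,
    Fintype.card_fin]
  congr 1
  have step1 : ∀ S ∈ powersetCard 2 (univ : Finset (Fin n)),
      (∑ i ∈ S, (MvPowerSeries.X i * MvPowerSeries.X i)
          * ∏ j ∈ Sᶜ, (MvPowerSeries.X j : R n))
      = ∑ i ∈ univ, if i ∈ S then (MvPowerSeries.X i * MvPowerSeries.X i)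
          * ∏ j ∈ Sᶜ, (MvPowerSeries.X j : R n) else 0 := by
    intro S _
    rw [Finset.sum_ite_mem, Finset.univ_inter]
  rw [Finset.sum_congr rfl step1, Finset.sum_comm]
  apply Finset.sum_congr rfl
  intro i _
  rw [← Finset.sum_filter, himg i,
    Finset.sum_image (by
      intro x hx y hy hxy
      have hx' : x ≠ i := (Finset.mem_erase.mp hx).1
      have : x ∈ ({i, y} : Finset (Fin n)) := by
        rw [← show ({i, x} : Finset (Fin n)) = {i, y} from hxy]; exact Finset.mem_insert_of_mem (Finset.mem_singleton_self x)
      rcases Finset.mem_insert.mp this with h | h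
      · exact absurd h hx'
      · exact Finset.mem_singleton.mp h)]
  apply Finset.sum_congr rfl
  intro b hb
  have hbi : b ≠ i := (Finset.mem_erase.mp hb).1
  have hnm : i ∉ (({i, b} : Finset (Fin n))ᶜ) := by simp
  have hins : insert i (({i, b} : Finset (Fin n))ᶜ) = ({b} : Finset (Fin n))ᶜ := by
    ext j
    simp only [Finset.mem_insert, Finset.mem_compl, Finset.mem_singleton]
    constructor
    · rintro (rfl | hj)
      · exact fun h => hbi h.symm
      · exact fun h => hj (Or.inr h)
    · intro hj
      by_cases hji : j = i
      · exact Or.inl hji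
      · exact Or.inr fun hc => hc.elim hji hj
  calc (MvPowerSeries.X i * MvPowerSeries.X i)
        * ∏ j ∈ (({i, b} : Finset (Fin n))ᶜ), (MvPowerSeries.X j : R n)
      = MvPowerSeries.X i * (MvPowerSeries.X i
          * ∏ j ∈ (({i, b} : Finset (Fin n))ᶜ), (MvPowerSeries.X j : R n)) := by ring
    _ = MvPowerSeries.X i
          * ∏ j ∈ insert i (({i, b} : Finset (Fin n))ᶜ), (MvPowerSeries.X j : R n) := by
        rw [Finset.prod_insert hnm]
    _ = MvPowerSeries.X i * ∏ j ∈ ({b} : Finset (Fin n))ᶜ, (MvPowerSeries.X j : R n) := by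
        rw [hins]


lemma e_one (n : ℕ) : esymmPS n 1 = ∑ b, (MvPowerSeries.X b : R n) := by
  rw [esymmPS, Finset.powersetCard_one, Finset.sum_map]
  simp

lemma e_top (n : ℕ) : esymmPS n n = ∏ j, (MvPowerSeries.X j : R n) := by
  have h := Finset.powersetCard_self (univ : Finset (Fin n))
  rw [Finset.card_univ, Fintype.card_fin] at h
  rw [esymmPS, h, Finset.sum_singleton]

lemma e_pred (n : ℕ) (hn : 1 ≤ n) :
    esymmPS n (n - 1) = ∑ b, ∏ j ∈ ({b} : Finset (Fin n))ᶜ, (MvPowerSeries.X j : R n) := by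
  have himg : powersetCard (n - 1) (univ : Finset (Fin n))
      = univ.image (fun b => (({b} : Finset (Fin n))ᶜ)) := by
    ext S
    simp only [Finset.mem_powersetCard_univ, Finset.mem_image, Finset.mem_univ, true_and]
    constructor
    · intro hS
      have hc : Sᶜ.card = 1 := by
        rw [Finset.card_compl, hS, Fintype.card_fin]
        omega
      obtain ⟨b, hb⟩ := Finset.card_eq_one.mp hc
      exact ⟨b, by rw [← hb, compl_compl]⟩
    · rintro ⟨b, rfl⟩
      rw [Finset.card_compl, Finset.card_singleton, Fintype.card_fin]
  rw [esymmPS, himg, Finset.sum_image (fun x _ y _ h =>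
    Finset.singleton_injective (compl_injective h))]


set_option maxHeartbeats 1600000 in
lemma per_pair (n : ℕ) (hn2 : 2 ≤ n) (a b : Fin n) (m Wa Wb : R n)
    (hmS : Hom m (n - 2)) :
    homComp n n (m * ((((1 : R n) - MvPowerSeries.C (σ := Fin n) (R := ℚ) (1/2) * MvPowerSeries.X a
        + MvPowerSeries.C (σ := Fin n) (R := ℚ) (1/12) * (MvPowerSeries.X a * MvPowerSeries.X a))
          + MvPowerSeries.X a ^ 3 * Wa)
      * (((1 : R n) - MvPowerSeries.C (σ := Fin n) (R := ℚ) (1/2) * MvPowerSeries.X b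
        + MvPowerSeries.C (σ := Fin n) (R := ℚ) (1/12) * (MvPowerSeries.X b * MvPowerSeries.X b))
          + MvPowerSeries.X b ^ 3 * Wb)))
    = MvPowerSeries.C (σ := Fin n) (R := ℚ) (1/12) * ((MvPowerSeries.X a * MvPowerSeries.X a) * m)
      + MvPowerSeries.C (σ := Fin n) (R := ℚ) (1/12) * ((MvPowerSeries.X b * MvPowerSeries.X b) * m)
      + MvPowerSeries.C (σ := Fin n) (R := ℚ) (1/4) * ((MvPowerSeries.X a * MvPowerSeries.X b) * m) := by
  have hC4 : MvPowerSeries.C (σ := Fin n) (R := ℚ) (1/2) * MvPowerSeries.C (σ := Fin n) (R := ℚ) (1/2)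
      = MvPowerSeries.C (σ := Fin n) (R := ℚ) (1/4) := by
    rw [← map_mul]; norm_num
  set c2 := MvPowerSeries.C (σ := Fin n) (R := ℚ) (1/2) with hc2
  set c12 := MvPowerSeries.C (σ := Fin n) (R := ℚ) (1/12) with hc12
  set Xa := (MvPowerSeries.X a : R n) with hXa
  set Xb := (MvPowerSeries.X b : R n) with hXb
  have split : m * ((((1 : R n) - c2 * Xa + c12 * (Xa * Xa)) + Xa ^ 3 * Wa)
      * (((1 : R n) - c2 * Xb + c12 * (Xb * Xb)) + Xb ^ 3 * Wb))
    = ((c12 * ((Xa * Xa) * m) + (c12 * ((Xb * Xb) * m) + (c2 * c2) * ((Xa * Xb) * m)))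
      + ((m + ((-c2) * (Xa * m) + (-c2) * (Xb * m)))
      + (((-(c2 * c12)) * ((Xa * (Xb * Xb)) * m) + (-(c12 * c2)) * (((Xa * Xa) * Xb) * m))
        + (c12 * c12) * (((Xa * Xa) * (Xb * Xb)) * m))))
      + (m * (((1 : R n) - c2 * Xa + c12 * (Xa * Xa)) * (Xb ^ 3 * Wb))
        + (m * ((Xa ^ 3 * Wa) * ((1 : R n) - c2 * Xb + c12 * (Xb * Xb)))
          + m * ((Xa ^ 3 * Wa) * (Xb ^ 3 * Wb)))) := by ring
  rw [split]
  simp only [homComp_add]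
  -- the kept part
  have k1 : homComp n n (c12 * ((Xa * Xa) * m)) = c12 * ((Xa * Xa) * m) :=
    homComp_eq_self_of_Hom (((Hom.C _).mul (((Hom.X a).mul (Hom.X a)).mul hmS)).of_eq
      (by omega))
  have k2 : homComp n n (c12 * ((Xb * Xb) * m)) = c12 * ((Xb * Xb) * m) :=
    homComp_eq_self_of_Hom (((Hom.C _).mul (((Hom.X b).mul (Hom.X b)).mul hmS)).of_eq
      (by omega))
  have k3 : homComp n n ((c2 * c2) * ((Xa * Xb) * m)) = (c2 * c2) * ((Xa * Xb) * m) :=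
    homComp_eq_self_of_Hom ((((Hom.C _).mul (Hom.C _)).mul
      (((Hom.X a).mul (Hom.X b)).mul hmS)).of_eq (by omega))
  -- the low-degree part
  have z0 : homComp n n m = 0 := homComp_eq_zero_of_Hom hmS (by omega)
  have z1 : homComp n n ((-c2) * (Xa * m)) = 0 :=
    homComp_eq_zero_of_Hom (((Hom.C _).neg).mul ((Hom.X a).mul hmS)) (by omega)
  have z2 : homComp n n ((-c2) * (Xb * m)) = 0 :=
    homComp_eq_zero_of_Hom (((Hom.C _).neg).mul ((Hom.X b).mul hmS)) (by omega)
  -- the high-degree monomial part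
  have z3 : homComp n n ((-(c2 * c12)) * ((Xa * (Xb * Xb)) * m)) = 0 :=
    homComp_eq_zero_of_Hom ((((Hom.C _).mul (Hom.C _)).neg).mul
      (((Hom.X a).mul ((Hom.X b).mul (Hom.X b))).mul hmS)) (by omega)
  have z4 : homComp n n ((-(c12 * c2)) * (((Xa * Xa) * Xb) * m)) = 0 :=
    homComp_eq_zero_of_Hom ((((Hom.C _).mul (Hom.C _)).neg).mul
      ((((Hom.X a).mul (Hom.X a)).mul (Hom.X b)).mul hmS)) (by omega)
  have z5 : homComp n n ((c12 * c12) * (((Xa * Xa) * (Xb * Xb)) * m)) = 0 :=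
    homComp_eq_zero_of_Hom (((Hom.C _).mul (Hom.C _)).mul
      ((((Hom.X a).mul (Hom.X a)).mul ((Hom.X b).mul (Hom.X b))).mul hmS)) (by omega)
  -- the junk with W's
  have zj1 : homComp n n (m * (((1 : R n) - c2 * Xa + c12 * (Xa * Xa)) * (Xb ^ 3 * Wb))) = 0 := by
    apply homComp_eq_zero_of_LB
    exact ((hmS.toLB.mul ((LB.zero _).mul ((LB.X_pow b 3).mul (LB.zero Wb)))).mono (by omega))
  have zj2 : homComp n n (m * ((Xa ^ 3 * Wa) * ((1 : R n) - c2 * Xb + c12 * (Xb * Xb)))) = 0 := by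
    apply homComp_eq_zero_of_LB
    exact ((hmS.toLB.mul (((LB.X_pow a 3).mul (LB.zero Wa)).mul (LB.zero _))).mono (by omega))
  have zj3 : homComp n n (m * ((Xa ^ 3 * Wa) * (Xb ^ 3 * Wb))) = 0 := by
    apply homComp_eq_zero_of_LB
    exact ((hmS.toLB.mul (((LB.X_pow a 3).mul (LB.zero Wa)).mul
      ((LB.X_pow b 3).mul (LB.zero Wb)))).mono (by omega))
  rw [k1, k2, k3, z0, z1, z2, z3, z4, z5, zj1, zj2, zj3]
  linear_combination ((Xa * Xb) * m) * hC4


end Aux5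

set_option maxHeartbeats 1600000 in
/-- Lemma 3.4 of the paper. Let `n ≥ 1`, let `E i = exp (-X i)` in
`R = MvPowerSeries (Fin n) ℚ` and let `T i` be the multiplicative inverse of the power
series `U i = (1 - E i)/X i` (Todd series). With
`K_j = ∑_{|S| = j} (∏_{i ∉ S} X i) * (∏_{i ∈ S} T i * E i)`, the homogeneous component
of total degree `n` of `K_2` equals `(1/12) * ((n(3n-5)/2) * e_n + e_1 * e_{n-1})`. -/
theorem stmt_5 (n : ℕ) (hn : 1 ≤ n)
    (E U T : Fin n → MvPowerSeries (Fin n) ℚ)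
    (hE : ∀ (i : Fin n) (d : Fin n →₀ ℕ), MvPowerSeries.coeff d (E i) =
      if d = Finsupp.single i (d i) then (-1 : ℚ) ^ (d i) / (Nat.factorial (d i) : ℚ) else 0)
    (hU : ∀ i, MvPowerSeries.X i * U i = 1 - E i)
    (hT : ∀ i, T i * U i = 1) :
    homComp n n
        (∑ S ∈ Finset.powersetCard 2 (Finset.univ : Finset (Fin n)),
          (∏ i ∈ Sᶜ, MvPowerSeries.X i) * ∏ i ∈ S, T i * E i)
      = MvPowerSeries.C (σ := Fin n) (R := ℚ) (1 / 12) *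
          (MvPowerSeries.C (σ := Fin n) (R := ℚ) ((n : ℚ) * (3 * (n : ℚ) - 5) / 2) * esymmPS n n
            + esymmPS n 1 * esymmPS n (n - 1)) := by
  classical
  have key' := fun i : Fin n => Aux5.key n i (E i) (U i) (T i) (hE i) (hU i) (hT i)
  choose W hW using key'
  rw [Aux5.homComp_sum]
  have per_S : ∀ S ∈ Finset.powersetCard 2 (Finset.univ : Finset (Fin n)),
      homComp n n ((∏ i ∈ Sᶜ, MvPowerSeries.X i) * ∏ i ∈ S, T i * E i)
      = MvPowerSeries.C (σ := Fin n) (R := ℚ) (1/12)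
          * ∑ i ∈ S, (MvPowerSeries.X i * MvPowerSeries.X i) * ∏ j ∈ Sᶜ, MvPowerSeries.X j
        + MvPowerSeries.C (σ := Fin n) (R := ℚ) (1/4) * ∏ j, MvPowerSeries.X j := by
    intro S hS
    have hcard : S.card = 2 := Finset.mem_powersetCard_univ.mp hS
    have hn2 : 2 ≤ n := by
      have h1 : S.card ≤ (Finset.univ : Finset (Fin n)).card :=
        Finset.card_le_card (Finset.subset_univ S)
      rw [hcard, Finset.card_univ, Fintype.card_fin] at h1
      exact h1
    obtain ⟨a, b, hab, rfl⟩ := Finset.card_eq_two.mp hcard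
    have hmS : Aux5.Hom (∏ j ∈ (({a, b} : Finset (Fin n))ᶜ), MvPowerSeries.X j) (n - 2) := by
      have h := Aux5.Hom.prod_X (({a, b} : Finset (Fin n))ᶜ)
      rwa [Finset.card_compl, hcard, Fintype.card_fin] at h
    rw [Finset.prod_pair hab, hW a, hW b,
      Aux5.per_pair n hn2 a b _ (W a) (W b) hmS, Finset.sum_pair hab]
    have hfull : (MvPowerSeries.X a * MvPowerSeries.X b)
          * ∏ j ∈ (({a, b} : Finset (Fin n))ᶜ), MvPowerSeries.X j
        = ∏ j, (MvPowerSeries.X j : Aux5.R n) := by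
      rw [← Finset.prod_pair (f := fun j => (MvPowerSeries.X j : Aux5.R n)) hab, mul_comm]
      exact Finset.prod_compl_mul_prod _ _
    rw [hfull]
    ring
  rw [Finset.sum_congr rfl per_S, Finset.sum_add_distrib, ← Finset.mul_sum,
    Finset.sum_const, Finset.card_powersetCard, Finset.card_univ, Fintype.card_fin,
    Aux5.e_top, Aux5.e_one, Aux5.e_pred n hn]
  have hcomb := Aux5.comb n
  rw [nsmul_eq_mul] at hcomb ⊢
  rw [← map_natCast (MvPowerSeries.C (σ := Fin n) (R := ℚ)) (n.choose 2)]
  rw [← map_natCast (MvPowerSeries.C (σ := Fin n) (R := ℚ)) n] at hcomb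
  have hCC : MvPowerSeries.C (σ := Fin n) (R := ℚ) ((n.choose 2 : ℚ)) * MvPowerSeries.C (σ := Fin n) (R := ℚ) (1/4)
      = MvPowerSeries.C (σ := Fin n) (R := ℚ) (1/12)
          * MvPowerSeries.C (σ := Fin n) (R := ℚ) ((n : ℚ) * (3 * (n : ℚ) - 5) / 2)
        + MvPowerSeries.C (σ := Fin n) (R := ℚ) (1/12) * MvPowerSeries.C (σ := Fin n) (R := ℚ) ((n : ℚ)) := by
    rw [← map_mul, ← map_mul, ← map_mul, ← map_add]
    congr 1
    rw [Nat.cast_choose_two]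
    ring
  linear_combination (MvPowerSeries.C (σ := Fin n) (R := ℚ) (1/12)) * hcomb
    + (∏ j, (MvPowerSeries.X j : Aux5.R n)) * hCC
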